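/- arXiv:math/0211242 — 5 statements merged into one kernel-verified Lean document; each statement's English description precedes it below -/
import Mathlib

section
/- Let G be a locally compact Hausdorff second countable group acting properly (in Bourbaki's sense) on a completely regular G-space X whose compact subsets are metrizable, with X/G paracompact Hausdorff. If X/G is compact, then X is locally compact and second countable. -/
open Pointwise

/-- Bourbaki-properness of a group action on a topological space. -/
def BourbakiProper (G X : Type*) [Group G] [TopologicalSpace G] [TopologicalSpace X]
    [MulAction G X] : Prop :=
  ∀ x y : X, ∃ U V : Set X, IsOpen U ∧ IsOpen V ∧ x ∈ U ∧ y ∈ V ∧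
    IsCompact (closure {g : G | (g • U ∩ V).Nonempty})

open Set Filter Topology

/-- Key lemma: in a proper G-space with compact orbit space (G Hausdorff, X regular),
every point has an open neighbourhood with compact closure. -/
lemma bourbaki_aux_compact_nhds {G X : Type*} [Group G] [TopologicalSpace G]
    [IsTopologicalGroup G] [T2Space G]
    [TopologicalSpace X] [MulAction G X] [ContinuousSMul G X] [RegularSpace X]
    [CompactSpace (Quotient (MulAction.orbitRel G X))]
    (hproper : BourbakiProper G X) (x : X) :
    ∃ V : Set X, IsOpen V ∧ x ∈ V ∧ IsCompact (closure V) := by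
  letI := MulAction.orbitRel G X
  have hπ : IsOpenQuotientMap (Quotient.mk' : X → Quotient (MulAction.orbitRel G X)) :=
    MulAction.isOpenQuotientMap_quotientMk
  have hπrel : ∀ a b : X,
      (Quotient.mk' a : Quotient (MulAction.orbitRel G X)) = Quotient.mk' b →
      ∃ g : G, g • b = a := by
    intro a b h
    rwa [Quotient.eq', MulAction.orbitRel_apply, MulAction.mem_orbit_iff] at h
  choose U V hUo hVo hxU hyV hC using hproper x
  have hcover : (univ : Set (Quotient (MulAction.orbitRel G X))) ⊆
      ⋃ y : X, Quotient.mk' '' V y := by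
    intro p _
    obtain ⟨y, rfl⟩ := hπ.surjective p
    exact mem_iUnion.2 ⟨y, mem_image_of_mem _ (hyV y)⟩
  obtain ⟨t, ht⟩ := isCompact_univ.elim_finite_subcover (fun y => Quotient.mk' '' V y)
    (fun y => hπ.isOpenMap _ (hVo y)) hcover
  set U0 : Set X := ⋂ y ∈ t, U y with hU0def
  have hU0o : IsOpen U0 := isOpen_biInter_finset fun y _ => hUo y
  have hxU0 : x ∈ U0 := mem_iInter₂.2 fun y _ => hxU y
  obtain ⟨Tc, hTcnhds, hTcclosed, hTcsub⟩ := exists_mem_nhds_isClosed_subset (hU0o.mem_nhds hxU0)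
  refine ⟨interior Tc, isOpen_interior, mem_interior_iff_mem_nhds.2 hTcnhds, ?_⟩
  have hclTc : closure (interior Tc) ⊆ U0 :=
    (closure_minimal interior_subset hTcclosed).trans hTcsub
  rw [isCompact_iff_ultrafilter_le_nhds]
  intro F hF
  have hVF : closure (interior Tc) ∈ F := le_principal_iff.1 hF
  have hU0F : U0 ∈ F := mem_of_superset hVF hclTc
  obtain ⟨p, -, hp⟩ := isCompact_univ.ultrafilter_le_nhds
    (F.map (Quotient.mk' : X → Quotient (MulAction.orbitRel G X))) (by simp)
  obtain ⟨y, rfl⟩ := hπ.surjective p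
  have hymem : (Quotient.mk' y : Quotient (MulAction.orbitRel G X)) ∈
      ⋃ y' ∈ t, Quotient.mk' '' V y' := ht (mem_univ _)
  rw [mem_iUnion₂] at hymem
  obtain ⟨y₀, hy₀t, v, hvV, hvy⟩ := hymem
  obtain ⟨g₀, hg₀⟩ := hπrel v y hvy
  set Wb : Set X := g₀⁻¹ • V y₀ with hWbdef
  have hWbo : IsOpen Wb := (hVo y₀).smul _
  have hyWb : y ∈ Wb := by
    rw [hWbdef, Set.mem_smul_set_iff_inv_smul_mem, inv_inv, hg₀]
    exact hvV
  set T : Set G := {h | ((h • U0) ∩ Wb).Nonempty} with hTdef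
  set C : Set G := closure T with hCdef
  have hU0sub : U0 ⊆ U y₀ := biInter_subset_of_mem hy₀t
  have hCcomp : IsCompact C := by
    have himg : IsCompact ((g₀⁻¹ * ·) '' closure {g : G | ((g • U y₀) ∩ V y₀).Nonempty}) :=
      (hC y₀).image (continuous_mul_left g₀⁻¹)
    refine himg.of_isClosed_subset isClosed_closure (closure_minimal ?_ himg.isClosed)
    rintro h ⟨z, hz1, hz2⟩
    refine ⟨g₀ * h, subset_closure ⟨g₀ • z, ?_, ?_⟩, by simp [inv_mul_cancel_left]⟩
    · obtain ⟨u, huU0, rfl⟩ := hz1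
      rw [← mul_smul]
      exact Set.smul_mem_smul_set (hU0sub huU0)
    · rw [hWbdef, Set.mem_smul_set_iff_inv_smul_mem, inv_inv] at hz2
      exact hz2
  have key : ∀ W' : Set X, IsOpen W' → y ∈ W' → C⁻¹ • W' ∈ F := by
    intro W' hW'o hyW'
    set W2 : Set X := W' ∩ Wb with hW2def
    have hW2o : IsOpen W2 := hW'o.inter hWbo
    have hyW2 : y ∈ W2 := ⟨hyW', hyWb⟩
    have hsat : (Quotient.mk' : X → Quotient (MulAction.orbitRel G X)) ⁻¹'
        (Quotient.mk' '' W2) ∈ F := by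
      have hmem : Quotient.mk' '' W2 ∈
          F.map (Quotient.mk' : X → Quotient (MulAction.orbitRel G X)) :=
        hp ((hπ.isOpenMap _ hW2o).mem_nhds (mem_image_of_mem _ hyW2))
      rwa [Ultrafilter.mem_map] at hmem
    refine mem_of_superset (inter_mem hU0F hsat) ?_
    rintro z ⟨hzU0, hzsat⟩
    obtain ⟨w, hwW2, hwz⟩ := hzsat
    obtain ⟨g, hg⟩ := hπrel z w hwz.symm
    have hw : w = g⁻¹ • z := by rw [← hg, inv_smul_smul]
    have hginv : g⁻¹ ∈ T := ⟨w, by rw [hw]; exact Set.smul_mem_smul_set hzU0, hwW2.2⟩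
    have hgC : g ∈ C⁻¹ := Set.mem_inv.2 (subset_closure hginv)
    have hz2 : z ∈ C⁻¹ • W2 := by
      rw [← hg]; exact Set.smul_mem_smul hgC hwW2
    exact Set.smul_subset_smul_left (inter_subset_left) hz2
  set K : Set X := (fun c : G => c • y) '' C⁻¹ with hKdef
  have hKcomp : IsCompact K := hCcomp.inv.image (continuous_id.smul continuous_const)
  suffices h : ∃ z ∈ K, ↑F ≤ 𝓝 z by
    obtain ⟨z, hzK, hzF⟩ := h
    refine ⟨z, ?_, hzF⟩
    have hz : z ∈ closure (closure (interior Tc)) :=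
      mem_closure_iff_ultrafilter.2 ⟨F, hVF, hzF⟩
    rwa [closure_closure] at hz
  by_contra hnot
  push_neg at hnot
  have hOz : ∀ z ∈ K, ∃ O : Set X, IsOpen O ∧ z ∈ O ∧ O ∉ F := by
    intro z hz
    have h1 := hnot z hz
    rw [Filter.le_def] at h1
    push_neg at h1
    obtain ⟨s, hs, hsF⟩ := h1
    obtain ⟨O, hOs, hOo, hzO⟩ := mem_nhds_iff.1 hs
    exact ⟨O, hOo, hzO, fun h => hsF (mem_of_superset h hOs)⟩
  choose O hOo hzO hOF using hOz
  obtain ⟨s', hs'⟩ := hKcomp.elim_nhds_subcover' (fun z hz => O z hz)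
    (fun z hz => (hOo z hz).mem_nhds (hzO z hz))
  set Ocup : Set X := ⋃ z ∈ s', O z.1 z.2 with hOcupdef
  have hs'' : K ⊆ Ocup := by simpa [hOcupdef] using hs'
  have hOcupO : IsOpen Ocup := isOpen_biUnion fun z _ => hOo z.1 z.2
  have hpre : IsOpen ((fun q : G × X => q.1 • q.2) ⁻¹' Ocup) := hOcupO.preimage continuous_smul
  have hsub : C⁻¹ ×ˢ ({y} : Set X) ⊆ (fun q : G × X => q.1 • q.2) ⁻¹' Ocup := by
    rintro ⟨c, y'⟩ ⟨hc, hy'⟩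
    have : y' = y := hy'
    subst this
    exact hs'' (Set.mem_image_of_mem _ hc)
  obtain ⟨v1, w1, hv1o, hw1o, hCv1, hyw1, hvw⟩ :=
    generalized_tube_lemma hCcomp.inv isCompact_singleton hpre hsub
  have hyw : y ∈ w1 := hyw1 rfl
  have hCw : C⁻¹ • w1 ⊆ Ocup := by
    intro z hz
    rw [Set.mem_smul] at hz
    obtain ⟨c, hc, b, hb, rfl⟩ := hz
    exact hvw (Set.mk_mem_prod (hCv1 hc) hb)
  have hOcupF : Ocup ∈ F := mem_of_superset (key w1 hw1o hyw) hCw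
  have hcompl : Ocupᶜ ∈ F := by
    rw [hOcupdef, Set.compl_iUnion₂]
    exact (Filter.biInter_finset_mem _).2 fun z _ =>
      (Ultrafilter.compl_mem_iff_notMem).2 (hOF z.1 z.2)
  have hempty : (∅ : Set X) ∈ F := by
    have h := inter_mem hOcupF hcompl
    rwa [inter_compl_self] at h
  exact F.neBot.ne (Filter.empty_mem_iff_bot.1 hempty)

/-- A proper G-space (completely regular, compact subsets metrizable,
paracompact Hausdorff quotient) with compact quotient is locally compact and
second countable. -/
theorem stmt_2 {G X : Type*} [Group G] [TopologicalSpace G] [IsTopologicalGroup G]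
    [LocallyCompactSpace G] [T2Space G] [SecondCountableTopology G]
    [TopologicalSpace X] [MulAction G X] [ContinuousSMul G X]
    [CompletelyRegularSpace X]
    (hmet : ∀ K : Set X, IsCompact K → TopologicalSpace.MetrizableSpace K)
    [ParacompactSpace (Quotient (MulAction.orbitRel G X))]
    [T2Space (Quotient (MulAction.orbitRel G X))]
    (hproper : BourbakiProper G X)
    [CompactSpace (Quotient (MulAction.orbitRel G X))] :
    LocallyCompactSpace X ∧ SecondCountableTopology X := by
  letI := MulAction.orbitRel G X
  have haux := bourbaki_aux_compact_nhds (G := G) (X := X) hproper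
  choose V hVo hxV hVc using haux
  haveI : WeaklyLocallyCompactSpace X :=
    ⟨fun x => ⟨closure (V x), hVc x,
      mem_of_superset ((hVo x).mem_nhds (hxV x)) subset_closure⟩⟩
  haveI hlc : LocallyCompactSpace X := inferInstance
  refine ⟨hlc, ?_⟩
  have hπ : IsOpenQuotientMap (Quotient.mk' : X → Quotient (MulAction.orbitRel G X)) :=
    MulAction.isOpenQuotientMap_quotientMk
  have hπrel : ∀ a b : X,
      (Quotient.mk' a : Quotient (MulAction.orbitRel G X)) = Quotient.mk' b →
      ∃ g : G, g • b = a := by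
    intro a b h
    rwa [Quotient.eq', MulAction.orbitRel_apply, MulAction.mem_orbit_iff] at h
  have hcover : (univ : Set (Quotient (MulAction.orbitRel G X))) ⊆
      ⋃ x : X, Quotient.mk' '' V x := by
    intro p _
    obtain ⟨x, rfl⟩ := hπ.surjective p
    exact mem_iUnion.2 ⟨x, mem_image_of_mem _ (hxV x)⟩
  obtain ⟨t, ht⟩ := isCompact_univ.elim_finite_subcover (fun x => Quotient.mk' '' V x)
    (fun x => hπ.isOpenMap _ (hVo x)) hcover
  set F0 : Set X := ⋃ x ∈ t, closure (V x) with hF0def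
  have hF0c : IsCompact F0 := t.finite_toSet.isCompact_biUnion fun x _ => hVc x
  have hF0 : ∀ z : X, ∃ g : G, g • z ∈ F0 := by
    intro z
    have hz : (Quotient.mk' z : Quotient (MulAction.orbitRel G X)) ∈
        ⋃ x ∈ t, Quotient.mk' '' V x := ht (mem_univ _)
    rw [mem_iUnion₂] at hz
    obtain ⟨x₀, hx₀t, v, hvV, hvz⟩ := hz
    obtain ⟨g, hg⟩ := hπrel v z hvz
    exact ⟨g, by rw [hg]; exact mem_biUnion hx₀t (subset_closure hvV)⟩
  have hD : ∀ n : ℕ, IsCompact ((compactCovering G n) • F0) := fun n =>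
    (isCompact_compactCovering G n).smul_set hF0c
  have hDcover : (⋃ n, (compactCovering G n) • F0) = univ := by
    refine eq_univ_of_forall fun z => ?_
    obtain ⟨g, hg⟩ := hF0 z
    obtain ⟨n, hn⟩ := exists_mem_compactCovering (g⁻¹ : G)
    refine mem_iUnion.2 ⟨n, ?_⟩
    have hzeq : z = g⁻¹ • (g • z) := by rw [inv_smul_smul]
    rw [hzeq]
    exact Set.smul_mem_smul hn hg
  have hL : ∀ n : ℕ, ∃ L : Set X, IsCompact L ∧ (compactCovering G n) • F0 ⊆ interior L :=
    fun n => exists_compact_superset (hD n)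
  choose L hLc hLsub using hL
  have hOopen : ∀ n : ℕ, IsOpen (interior (L n)) := fun n => isOpen_interior
  have hOcover : (⋃ n, interior (L n)) = univ := by
    apply eq_univ_of_univ_subset
    rw [← hDcover]
    exact iUnion_mono fun n => hLsub n
  have hsc : ∀ n : ℕ, SecondCountableTopology (interior (L n)) := by
    intro n
    haveI : TopologicalSpace.MetrizableSpace (L n) := hmet _ (hLc n)
    haveI : CompactSpace (L n) := isCompact_iff_compactSpace.1 (hLc n)
    letI : MetricSpace (L n) := TopologicalSpace.metrizableSpaceMetric _
    haveI : SecondCountableTopology (L n) := inferInstance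
    exact (Topology.IsEmbedding.inclusion (interior_subset (s := L n))).secondCountableTopology
  exact @TopologicalSpace.secondCountableTopology_of_countable_cover X _ ℕ _ _ hsc hOopen hOcover
end

section
/- Let G be a locally compact Hausdorff second countable group with Haar measure dg acting properly on a locally compact G-space X with X/G compact. Then there exists a cutoff function on X: a continuous function c : X → ℝ≥0 such that supp(c) ∩ G·K is compact for every compact K ⊆ X, and ∫_G c(g⁻¹x) dg = 1 for every x ∈ X. -/
open Pointwise MeasureTheory

section Aux

variable {G X : Type*} [Group G] [TopologicalSpace G] [TopologicalSpace X] [MulAction G X]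

/-- From Bourbaki properness: the transporter set of two compacts is contained in
a compact set of the group. -/
lemma bourbaki_bound (hproper : BourbakiProper G X) {A B : Set X}
    (hA : IsCompact A) (hB : IsCompact B) :
    ∃ L : Set G, IsCompact L ∧ ∀ g : G, (g • A ∩ B).Nonempty → g ∈ L := by
  classical
  have inner : ∀ a : X, ∃ U : Set X, IsOpen U ∧ a ∈ U ∧
      ∃ L : Set G, IsCompact L ∧ ∀ g : G, (g • U ∩ B).Nonempty → g ∈ L := by
    intro a
    choose U V hU hV haU hbV hL using hproper a
    obtain ⟨t, ht⟩ := hB.elim_finite_subcover V hV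
      (fun b hb => Set.mem_iUnion.2 ⟨b, hbV b⟩)
    refine ⟨⋂ b ∈ t, U b, isOpen_biInter_finset (fun b _ => hU b),
      Set.mem_iInter₂.2 fun b _ => haU b,
      ⋃ b ∈ t, closure {g : G | (g • U b ∩ V b).Nonempty},
      t.finite_toSet.isCompact_biUnion (fun b _ => hL b), ?_⟩
    rintro g ⟨x, hx1, hx2⟩
    obtain ⟨b, hbt, hxb⟩ := Set.mem_iUnion₂.1 (ht hx2)
    have hxU : x ∈ g • U b := Set.smul_set_mono (Set.biInter_subset_of_mem hbt) hx1
    exact Set.mem_biUnion hbt (subset_closure ⟨x, hxU, hxb⟩)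
  choose U hUo haU L hLc hLs using inner
  obtain ⟨t, ht⟩ := hA.elim_finite_subcover U hUo (fun a ha => Set.mem_iUnion.2 ⟨a, haU a⟩)
  refine ⟨⋃ a ∈ t, L a, t.finite_toSet.isCompact_biUnion (fun a _ => hLc a), ?_⟩
  rintro g ⟨x, hx1, hx2⟩
  obtain ⟨a, haA, rfl⟩ := Set.mem_smul_set.1 hx1
  obtain ⟨a₀, ha₀t, haU₀⟩ := Set.mem_iUnion₂.1 (ht haA)
  exact Set.mem_biUnion ha₀t (hLs a₀ g ⟨g • a, Set.smul_mem_smul_set haU₀, hx2⟩)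

/-- In a space whose compact sets are metrizable, the intersection of two compact
sets is compact. -/
lemma isCompact_inter_of_metrizable {Y : Type*} [TopologicalSpace Y]
    (hmet : ∀ K : Set Y, IsCompact K → TopologicalSpace.MetrizableSpace K)
    {A B : Set Y} (hA : IsCompact A) (hB : IsCompact B) : IsCompact (A ∩ B) := by
  set M : Set Y := A ∪ B with hMdef
  have hM : IsCompact M := hA.union hB
  haveI := hmet M hM
  haveI : CompactSpace M := isCompact_iff_compactSpace.1 hM
  set A' : Set M := Subtype.val ⁻¹' A with hA'def
  set B' : Set M := Subtype.val ⁻¹' B with hB'def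
  have hAimg : Subtype.val '' A' = A := by
    rw [hA'def, Set.image_preimage_eq_inter_range, Subtype.range_coe]
    exact Set.inter_eq_self_of_subset_left Set.subset_union_left
  have hBimg : Subtype.val '' B' = B := by
    rw [hB'def, Set.image_preimage_eq_inter_range, Subtype.range_coe]
    exact Set.inter_eq_self_of_subset_left Set.subset_union_right
  have hA'c : IsCompact A' := Subtype.isCompact_iff.2 (hAimg ▸ hA)
  have hB'c : IsCompact B' := Subtype.isCompact_iff.2 (hBimg ▸ hB)
  have hclosed : IsClosed (A' ∩ B') := (hA'c.isClosed).inter (hB'c.isClosed)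
  have hcomp : IsCompact (A' ∩ B') := hclosed.isCompact
  have : Subtype.val '' (A' ∩ B') = A ∩ B := by
    rw [Set.image_inter Subtype.val_injective, hAimg, hBimg]
  exact this ▸ hcomp.image continuous_subtype_val

end Aux

section Main

variable {G X : Type*} [Group G] [TopologicalSpace G] [TopologicalSpace X] [MulAction G X]

/-- Existence of a compact set meeting every orbit, when the orbit space is compact. -/
lemma exists_compact_orbit_transversal [ContinuousSMul G X] [LocallyCompactSpace X]
    [CompactSpace (Quotient (MulAction.orbitRel G X))] :
    ∃ S : Set X, IsCompact S ∧ ∀ x : X, ∃ g : G, g⁻¹ • x ∈ S := by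
  choose N hNc hNx using fun x : X => exists_compact_mem_nhds x
  set π : X → Quotient (MulAction.orbitRel G X) := Quotient.mk (MulAction.orbitRel G X) with hπ
  have hopen : ∀ x : X, IsOpen (π '' interior (N x)) := fun x =>
    (MulAction.isOpenQuotientMap_quotientMk (Γ := G)).isOpenMap _ isOpen_interior
  have hcover : (Set.univ : Set (Quotient (MulAction.orbitRel G X))) ⊆
      ⋃ x : X, π '' interior (N x) := by
    rintro q -
    obtain ⟨y, rfl⟩ := Quotient.exists_rep q
    exact Set.mem_iUnion.2 ⟨y, ⟨y, mem_interior_iff_mem_nhds.2 (hNx y), rfl⟩⟩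
  obtain ⟨t, ht⟩ := isCompact_univ.elim_finite_subcover _ hopen hcover
  refine ⟨⋃ x ∈ t, N x, t.finite_toSet.isCompact_biUnion (fun x _ => hNc x), ?_⟩
  intro y
  obtain ⟨x, hxt, u, hu, hup⟩ := Set.mem_iUnion₂.1 (ht (Set.mem_univ (π y)))
  have horb : u ∈ MulAction.orbit G y :=
    MulAction.orbitRel_apply.1 ((@Quotient.eq _ (MulAction.orbitRel G X) u y).1 hup)
  obtain ⟨g, hg⟩ := MulAction.mem_orbit_iff.1 horb
  refine ⟨g⁻¹, ?_⟩
  rw [inv_inv, hg]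
  exact Set.mem_biUnion hxt (interior_subset hu)

/-- A nonnegative continuous bump with compact support, equal to 1 at a given point. -/
lemma exists_bump [LocallyCompactSpace X] [CompletelyRegularSpace X] (s : X) :
    ∃ f : X → ℝ, Continuous f ∧ (∀ y, 0 ≤ f y) ∧ f s = 1 ∧ HasCompactSupport f := by
  obtain ⟨N, hNc, hNx⟩ := exists_compact_mem_nhds s
  have hsK : s ∉ (interior N)ᶜ := fun h => h (mem_interior_iff_mem_nhds.2 hNx)
  obtain ⟨f₀, hf₀c, hf₀s, hf₀K⟩ := CompletelyRegularSpace.completely_regular s (interior N)ᶜ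
    (isOpen_interior.isClosed_compl) hsK
  refine ⟨fun y => 1 - (f₀ y : ℝ), continuous_const.sub (continuous_subtype_val.comp hf₀c),
    fun y => by show (0:ℝ) ≤ 1 - (f₀ y : ℝ); have := (f₀ y).2.2; linarith, by simp [hf₀s], ?_⟩
  have hsupp : Function.support (fun y => 1 - (f₀ y : ℝ)) ⊆ interior N := by
    intro y hy
    by_contra hyn
    have : f₀ y = 1 := hf₀K hyn
    apply hy
    simp [this]
  have htsupp : tsupport (fun y => 1 - (f₀ y : ℝ)) ⊆ closure N :=
    closure_minimal (hsupp.trans (interior_subset.trans subset_closure)) isClosed_closure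
  exact IsCompact.of_isClosed_subset hNc.closure (isClosed_tsupport _) htsupp

lemma hasCompactSupport_finset_sum {ι Y : Type*} [TopologicalSpace Y] (t : Finset ι)
    (F : ι → Y → ℝ) (h : ∀ i ∈ t, HasCompactSupport (F i)) :
    HasCompactSupport (fun y => ∑ i ∈ t, F i y) := by
  classical
  induction t using Finset.induction_on with
  | empty => simp only [Finset.sum_empty]; exact HasCompactSupport.zero
  | @insert a u hni ih =>
    have : (fun y => ∑ i ∈ insert a u, F i y) = (fun y => F a y + ∑ i ∈ u, F i y) := by
      funext y; rw [Finset.sum_insert hni]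
    rw [this]
    exact (h a (Finset.mem_insert_self a u)).add
      (ih (fun i hi => h i (Finset.mem_insert_of_mem hi)))

/-- A nonnegative continuous compactly supported function positive on a given compact set. -/
lemma exists_pos_on_compact [LocallyCompactSpace X] [CompletelyRegularSpace X]
    {S : Set X} (hS : IsCompact S) :
    ∃ f : X → ℝ, Continuous f ∧ (∀ y, 0 ≤ f y) ∧ HasCompactSupport f ∧ ∀ s ∈ S, 0 < f s := by
  classical
  choose F hFc hF0 hF1 hFsupp using fun s : X => exists_bump s
  obtain ⟨t, ht⟩ := hS.elim_finite_subcover (fun s => F s ⁻¹' Set.Ioi 0)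
    (fun s => isOpen_Ioi.preimage (hFc s))
    (fun s hs => Set.mem_iUnion.2 ⟨s, by simp [Set.mem_preimage, hF1 s]⟩)
  refine ⟨fun y => ∑ s ∈ t, F s y, continuous_finset_sum _ (fun s _ => hFc s),
    fun y => Finset.sum_nonneg (fun s _ => hF0 s y),
    hasCompactSupport_finset_sum t F (fun i _ => hFsupp i), ?_⟩
  intro s hs
  obtain ⟨i, hit, hpos⟩ := Set.mem_iUnion₂.1 (ht hs)
  exact Finset.sum_pos' (fun j _ => hF0 j s) ⟨i, hit, hpos⟩

end Main

/-- existence of a cutoff function on a locally compact G-compact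
proper G-space: a continuous c : X → ℝ≥0 with supp(c) ∩ G·K compact for every
compact K and ∫_G c(g⁻¹x) dg = 1 for all x. -/
theorem stmt_4 {G X : Type*} [Group G] [TopologicalSpace G] [IsTopologicalGroup G]
    [LocallyCompactSpace G] [T2Space G] [SecondCountableTopology G]
    [MeasurableSpace G] [BorelSpace G] (μ : Measure G) [μ.IsHaarMeasure]
    [TopologicalSpace X] [LocallyCompactSpace X] [MulAction G X] [ContinuousSMul G X]
    [CompletelyRegularSpace X]
    (hmet : ∀ K : Set X, IsCompact K → TopologicalSpace.MetrizableSpace K)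
    [ParacompactSpace (Quotient (MulAction.orbitRel G X))]
    [T2Space (Quotient (MulAction.orbitRel G X))]
    (hproper : BourbakiProper G X)
    [CompactSpace (Quotient (MulAction.orbitRel G X))] :
    ∃ c : X → ℝ, Continuous c ∧ (∀ x, 0 ≤ c x) ∧
      (∀ K : Set X, IsCompact K → IsCompact (tsupport c ∩ ⋃ g : G, g • K)) ∧
      ∀ x : X, ∫ g, c (g⁻¹ • x) ∂μ = 1 := by
  obtain ⟨S, hScomp, hSorb⟩ := exists_compact_orbit_transversal (G := G) (X := X)
  obtain ⟨f, hfc, hf0, hfsupp, hfpos⟩ := exists_pos_on_compact hScomp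
  set Kf : Set X := tsupport f with hKf
  have hKfc : IsCompact Kf := hfsupp
  -- the continuous map (g, x) ↦ f (g⁻¹ • x)
  have hψcont : ∀ x : X, Continuous fun g : G => f (g⁻¹ • x) :=
    fun x => hfc.comp (continuous_inv.smul continuous_const)
  -- support bound for the group variable, uniformly over a compact set of x's
  have hsuppB : ∀ {B : Set X}, IsCompact B → ∃ L : Set G, IsCompact L ∧
      ∀ x ∈ B, Function.support (fun g : G => f (g⁻¹ • x)) ⊆ L := by
    intro B hB
    obtain ⟨L, hLc, hLs⟩ := bourbaki_bound hproper hKfc hB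
    refine ⟨L, hLc, fun x hx g hg => ?_⟩
    have hgx : g⁻¹ • x ∈ Kf := subset_tsupport f hg
    have : x ∈ g • Kf := ⟨g⁻¹ • x, hgx, by simp⟩
    exact hLs g ⟨x, this, hx⟩
  -- integrability of the integrand
  have hint : ∀ x : X, Integrable (fun g : G => f (g⁻¹ • x)) μ := by
    intro x
    obtain ⟨L, hLc, hLs⟩ := hsuppB (isCompact_singleton (x := x))
    have hHCS : HasCompactSupport fun g : G => f (g⁻¹ • x) :=
      IsCompact.of_isClosed_subset hLc (isClosed_tsupport _)
        (closure_minimal (hLs x rfl) hLc.isClosed)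
    exact (hψcont x).integrable_of_hasCompactSupport hHCS
  -- the denominator
  set F : X → ℝ := fun x => ∫ g, f (g⁻¹ • x) ∂μ with hFdef
  have hFinv : ∀ (h : G) (x : X), F (h • x) = F x := by
    intro h x
    have key := integral_mul_left_eq_self (μ := μ) (fun g => f (g⁻¹ • x)) h⁻¹
    calc F (h • x) = ∫ g, f ((h⁻¹ * g)⁻¹ • x) ∂μ := by
          simp only [hFdef, mul_inv_rev, inv_inv, mul_smul]
      _ = ∫ g, f (g⁻¹ • x) ∂μ := key
      _ = F x := rfl
  have hFpos : ∀ x : X, 0 < F x := by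
    intro x
    rw [hFdef]
    rw [integral_pos_iff_support_of_nonneg (fun g => hf0 _) (hint x)]
    obtain ⟨g₀, hg₀⟩ := hSorb x
    have hne : (Function.support fun g : G => f (g⁻¹ • x)).Nonempty :=
      ⟨g₀, (hfpos _ hg₀).ne'⟩
    have hopen : IsOpen (Function.support fun g : G => f (g⁻¹ • x)) :=
      isOpen_compl_singleton.preimage (hψcont x)
    exact hopen.measure_pos μ hne
  -- continuity of F
  have hFcont : Continuous F := by
    rw [continuous_iff_continuousAt]
    intro x₀
    obtain ⟨B, hBc, hBx⟩ := exists_compact_mem_nhds x₀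
    obtain ⟨L, hLc, hLs⟩ := hsuppB hBc
    obtain ⟨C₀, hC₀⟩ : ∃ C₀, ∀ y ∈ Kf, f y ≤ C₀ := by
      rcases (hKfc.image_of_continuousOn hfc.continuousOn).bddAbove with ⟨C₀, hC₀⟩
      exact ⟨C₀, fun y hy => hC₀ ⟨y, hy, rfl⟩⟩
    set C : ℝ := max C₀ 0 with hCdef
    have hfC : ∀ y, |f y| ≤ C := by
      intro y
      rw [abs_of_nonneg (hf0 y)]
      by_cases hy : y ∈ Kf
      · exact (hC₀ y hy).trans (le_max_left _ _)
      · rw [image_eq_zero_of_notMem_tsupport hy]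
        exact le_max_right _ _
    have hC0 : 0 ≤ C := le_max_right _ _
    haveI := hmet B hBc
    have hres : ContinuousOn F B := by
      rw [continuousOn_iff_continuous_restrict, continuous_iff_continuousAt]
      intro b₀
      have hrestr : B.domRestrict F = fun b : B => ∫ g, f (g⁻¹ • (b : X)) ∂μ := rfl
      rw [hrestr]
      refine continuousAt_of_dominated (bound := L.indicator fun _ => C) ?_ ?_ ?_ ?_
      · exact Filter.Eventually.of_forall fun b => (hψcont (b : X)).aestronglyMeasurable
      · refine Filter.Eventually.of_forall fun b => Filter.Eventually.of_forall fun g => ?_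
        rw [Real.norm_eq_abs]
        by_cases hg : f (g⁻¹ • (b : X)) = 0
        · rw [hg, abs_zero]
          exact Set.indicator_nonneg (fun _ _ => hC0) g
        · have hgL : g ∈ L := hLs (b : X) b.2 hg
          rw [Set.indicator_of_mem hgL]
          exact hfC _
      · exact (integrable_indicator_iff hLc.isClosed.measurableSet).2
          (integrableOn_const hLc.measure_lt_top.ne)
      · exact Filter.Eventually.of_forall fun g =>
          ((hfc.comp (continuous_const_smul g⁻¹)).comp continuous_subtype_val).continuousAt
    exact hres.continuousAt hBx
  -- the cutoff function
  refine ⟨fun x => f x / F x, hfc.div hFcont (fun x => (hFpos x).ne'), ?_, ?_, ?_⟩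
  · exact fun x => div_nonneg (hf0 x) (hFpos x).le
  · intro K hK
    set c : X → ℝ := fun x => f x / F x with hcdef
    have hsupp_c : tsupport c ⊆ Kf := by
      refine closure_minimal ?_ (isClosed_tsupport f)
      intro x hx
      by_contra hxn
      have hfx : f x = 0 := image_eq_zero_of_notMem_tsupport hxn
      exact hx (by simp [hcdef, hfx])
    have hTc : IsCompact (tsupport c) :=
      IsCompact.of_isClosed_subset hKfc (isClosed_tsupport c) hsupp_c
    obtain ⟨L, hLc, hLs⟩ := bourbaki_bound hproper hK hTc
    have heq : tsupport c ∩ ⋃ g : G, g • K = tsupport c ∩ (L • K) := by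
      apply Set.Subset.antisymm
      · rintro x ⟨hxT, hxU⟩
        obtain ⟨g, hg⟩ := Set.mem_iUnion.1 hxU
        have hgL : g ∈ L := hLs g ⟨x, hg, hxT⟩
        obtain ⟨k, hk, rfl⟩ := Set.mem_smul_set.1 hg
        exact ⟨hxT, Set.smul_mem_smul hgL hk⟩
      · rintro x ⟨hxT, hxL⟩
        obtain ⟨g, hgL, k, hk, rfl⟩ := Set.mem_smul.1 hxL
        exact ⟨hxT, Set.mem_iUnion.2 ⟨g, Set.smul_mem_smul_set hk⟩⟩
    rw [heq]
    exact isCompact_inter_of_metrizable hmet hTc (hLc.smul_set hK)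
  · intro x
    have h1 : ∀ g : G, f (g⁻¹ • x) / F (g⁻¹ • x) = f (g⁻¹ • x) / F x := by
      intro g; rw [hFinv g⁻¹ x]
    calc (∫ g, f (g⁻¹ • x) / F (g⁻¹ • x) ∂μ) = ∫ g, f (g⁻¹ • x) / F x ∂μ := by
          simp_rw [h1]
      _ = (∫ g, f (g⁻¹ • x) ∂μ) / F x := integral_div _ _
      _ = 1 := div_self (hFpos x).ne'
end

section
/- With the above setup, the action of G on P_c(G) by left translation is proper in Bourbaki's sense: for any μ, ν ∈ P_c(G) there are open neighbourhoods U_μ, U_ν in P_c(G) such that {g ∈ G : gU_μ ∩ U_ν ≠ ∅} has compact closure in G. -/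
open MeasureTheory Topology
open scoped ENNReal Pointwise

/-- The set of compactly supported probability measures P_c(G) = ⋃ᵢ P(Kᵢ), realised
as measures on G giving full mass to some member of the exhausting family K. -/
def PcCarrier {G : Type*} [MeasurableSpace G] (K : ℕ → Set G) : Type _ :=
  {μ : Measure G // IsProbabilityMeasure μ ∧ ∃ n, μ (K n)ᶜ = 0}

/-- On the space of probability measures with the topology of weak convergence, the set
of measures giving a closed set mass `< c` is open. -/
lemma isOpen_probabilityMeasure_closed_lt {Ω : Type*} [MeasurableSpace Ω] [TopologicalSpace Ω]
    [OpensMeasurableSpace Ω] [HasOuterApproxClosed Ω] {F : Set Ω} (hF : IsClosed F) (c : ℝ≥0∞) :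
    IsOpen {σ : ProbabilityMeasure Ω | (σ : Measure Ω) F < c} := by
  rw [isOpen_iff_mem_nhds]
  intro σ₀ hσ₀
  have h := ProbabilityMeasure.limsup_measure_closed_le_of_tendsto
    (μs := (id : ProbabilityMeasure Ω → ProbabilityMeasure Ω)) (L := 𝓝 σ₀)
    Filter.tendsto_id hF
  exact Filter.eventually_lt_of_limsup_lt (lt_of_le_of_lt h hσ₀)

/-- the left translation action of G on P_c(G) (direct limit topology
over the weak* topologies on the P(Kᵢ)) is proper in Bourbaki's sense. -/
theorem stmt_8 {G : Type*} [Group G] [TopologicalSpace G] [IsTopologicalGroup G]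
    [LocallyCompactSpace G] [SecondCountableTopology G] [T2Space G]
    [MeasurableSpace G] [BorelSpace G]
    (K : ℕ → Set G) (hmono : Monotone K) (hcpt : ∀ n, IsCompact (K n))
    (hcover : ⋃ n, K n = Set.univ)
    (hcof : ∀ C : Set G, IsCompact C → ∃ n, C ⊆ K n)
    [τ : TopologicalSpace (PcCarrier K)]
    (j : ∀ n, ProbabilityMeasure (K n) → PcCarrier K)
    (hj : ∀ n (μ : ProbabilityMeasure (K n)) (U : Set G), MeasurableSet U →
      (j n μ).1 U = (μ : Measure (K n)) (Subtype.val ⁻¹' U))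
    (hjall : ∀ ν : PcCarrier K, ∃ n μ, j n μ = ν)
    (hτ : ∀ U : Set (PcCarrier K), IsOpen U ↔ ∀ n, IsOpen (j n ⁻¹' U))
    (act : G → PcCarrier K → PcCarrier K)
    (hact : ∀ (g : G) (ν : PcCarrier K) (U : Set G), MeasurableSet U →
      (act g ν).1 U = ν.1 ((g * ·) ⁻¹' U)) :
    ∀ μ ν : PcCarrier K, ∃ U V : Set (PcCarrier K), IsOpen U ∧ IsOpen V ∧
      μ ∈ U ∧ ν ∈ V ∧ IsCompact (closure {g : G | (act g '' U ∩ V).Nonempty}) := by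
  intro μ ν
  obtain ⟨hμprob, m, hm⟩ := μ.2
  obtain ⟨hνprob, p, hp⟩ := ν.2
  obtain ⟨Wμ, hWμo, hWμsub, hWμc⟩ := exists_isOpen_superset_and_isCompact_closure (hcpt m)
  obtain ⟨Wν, hWνo, hWνsub, hWνc⟩ := exists_isOpen_superset_and_isCompact_closure (hcpt p)
  -- the neighbourhoods: measures giving the complement of Wμ (resp. Wν) mass < 1/2
  refine ⟨{ρ : PcCarrier K | ρ.1 Wμᶜ < 1/2}, {ρ : PcCarrier K | ρ.1 Wνᶜ < 1/2}, ?_, ?_, ?_, ?_, ?_⟩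
  · rw [hτ]
    intro n
    have : (j n) ⁻¹' {ρ : PcCarrier K | ρ.1 Wμᶜ < 1/2}
        = {σ : ProbabilityMeasure (K n) |
            (σ : Measure (K n)) (Subtype.val ⁻¹' Wμᶜ) < 1/2} := by
      ext σ
      simp only [Set.mem_preimage, Set.mem_setOf_eq,
        hj n σ Wμᶜ hWμo.isClosed_compl.measurableSet]
    rw [this]
    exact isOpen_probabilityMeasure_closed_lt
      (hWμo.isClosed_compl.preimage continuous_subtype_val) _
  · rw [hτ]
    intro n
    have : (j n) ⁻¹' {ρ : PcCarrier K | ρ.1 Wνᶜ < 1/2}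
        = {σ : ProbabilityMeasure (K n) |
            (σ : Measure (K n)) (Subtype.val ⁻¹' Wνᶜ) < 1/2} := by
      ext σ
      simp only [Set.mem_preimage, Set.mem_setOf_eq,
        hj n σ Wνᶜ hWνo.isClosed_compl.measurableSet]
    rw [this]
    exact isOpen_probabilityMeasure_closed_lt
      (hWνo.isClosed_compl.preimage continuous_subtype_val) _
  · have : μ.1 Wμᶜ = 0 :=
      measure_mono_null (Set.compl_subset_compl.mpr hWμsub) hm
    simp [this]
  · have : ν.1 Wνᶜ = 0 :=
      measure_mono_null (Set.compl_subset_compl.mpr hWνsub) hp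
    simp [this]
  · -- compactness of the closure of the transporting set
    have hC : IsCompact (closure Wν * (closure Wμ)⁻¹) := hWνc.mul hWμc.inv
    apply hC.of_isClosed_subset isClosed_closure
    apply closure_minimal _ hC.isClosed
    rintro g ⟨ρ', ⟨ρ, hρU, rfl⟩, hρ'V⟩
    -- ρ gives Wμ mass > 1/2 and g⁻¹Wν mass > 1/2, so they intersect
    haveI : IsProbabilityMeasure ρ.1 := ρ.2.1
    have h1 : ρ.1 Wμᶜ < 1/2 := hρU
    have h2 : ρ.1 ((g * ·) ⁻¹' Wν)ᶜ < 1/2 := by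
      have := hact g ρ Wνᶜ hWνo.isClosed_compl.measurableSet
      have h' : (act g ρ).1 Wνᶜ < 1/2 := hρ'V
      rwa [this, Set.preimage_compl] at h'
    have hunion : ρ.1 (Wμᶜ ∪ ((g * ·) ⁻¹' Wν)ᶜ) < 1 := by
      calc ρ.1 (Wμᶜ ∪ ((g * ·) ⁻¹' Wν)ᶜ) ≤ ρ.1 Wμᶜ + ρ.1 ((g * ·) ⁻¹' Wν)ᶜ :=
            measure_union_le _ _
        _ < 1/2 + 1/2 := ENNReal.add_lt_add h1 h2
        _ = 1 := ENNReal.add_halves 1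
    have hne : (Wμ ∩ (g * ·) ⁻¹' Wν).Nonempty := by
      rw [Set.nonempty_iff_ne_empty]
      intro hemp
      have : Wμᶜ ∪ ((g * ·) ⁻¹' Wν)ᶜ = Set.univ := by
        rw [← Set.compl_inter, hemp, Set.compl_empty]
      rw [this, measure_univ] at hunion
      exact lt_irrefl _ hunion
    obtain ⟨x, hxμ, hxν⟩ := hne
    have : g = (g * x) * x⁻¹ := by group
    rw [this]
    exact Set.mul_mem_mul (subset_closure hxν)
      (Set.inv_mem_inv.mpr (subset_closure hxμ))
end

section
/- Let G be a locally compact Hausdorff group with left Haar measure, H an open subgroup, and X a locally compact proper H-space contained in P_c(H) ⊆ P_c(G) (so each x ∈ X is a compactly supported probability measure on H). Then the natural G-map F : G ×_H X → G·X, [g, x] ↦ gx, is a G-equivariant homeomorphism. -/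
open MeasureTheory Function Topology

/-- The compactly supported Borel probability measures on G (the carrier of P_c(G)). -/
def CPM (G : Type*) [TopologicalSpace G] [MeasurableSpace G] : Type _ :=
  {μ : Measure G // IsProbabilityMeasure μ ∧ ∃ C : Set G, IsCompact C ∧ μ Cᶜ = 0}

open BoundedContinuousFunction NNReal ENNReal in
lemma aux_testAgainstNN_joint {Ω : Type*} [MeasurableSpace Ω] [TopologicalSpace Ω]
    [OpensMeasurableSpace Ω] :
    Continuous fun p : (Ω →ᵇ ℝ≥0) × ProbabilityMeasure Ω =>
      p.2.toFiniteMeasure.testAgainstNN p.1 :=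
  continuous_prod_of_continuous_lipschitzWith _ 1
    (fun f => ProbabilityMeasure.continuous_testAgainstNN_eval f)
    (fun μ => μ.testAgainstNN_lipschitz)

open BoundedContinuousFunction NNReal ENNReal in
lemma aux_map_joint {α β Ω : Type*} [TopologicalSpace α] [TopologicalSpace β]
    [CompactSpace β] [MeasurableSpace β] [OpensMeasurableSpace β]
    [TopologicalSpace Ω] [MeasurableSpace Ω] [BorelSpace Ω]
    (a : C(α × β, Ω)) :
    Continuous fun p : α × ProbabilityMeasure β =>
      p.2.map (f := fun b => a (p.1, b))
        ((a.continuous.comp (Continuous.prodMk_right p.1)).measurable.aemeasurable) := by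
  rw [continuous_iff_continuousAt]
  intro p₀
  rw [ContinuousAt]
  rw [ProbabilityMeasure.tendsto_iff_forall_lintegral_tendsto]
  intro f
  set φ : α → (β →ᵇ ℝ≥0) := fun x =>
    (ContinuousMap.equivBoundedOfCompact β ℝ≥0) ((f.toContinuousMap).comp (a.curry x)) with hφdef
  have hφ : Continuous φ :=
    ((ContinuousMap.isUniformInducing_equivBoundedOfCompact β
        ℝ≥0).uniformContinuous.continuous).comp
      ((ContinuousMap.continuous_postcomp f.toContinuousMap).comp a.curry.continuous)
  have key : ∀ p : α × ProbabilityMeasure β,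
      (∫⁻ ω, (f ω : ℝ≥0∞) ∂(ProbabilityMeasure.toMeasure (p.2.map (f := fun b => a (p.1, b))
          ((a.continuous.comp (Continuous.prodMk_right p.1)).measurable.aemeasurable))))
        = (p.2.toFiniteMeasure.testAgainstNN (φ p.1) : ℝ≥0∞) := by
    intro p
    rw [ProbabilityMeasure.toMeasure_map,
      lintegral_map (by exact (ENNReal.continuous_coe.comp f.continuous).measurable)
        (show Measurable fun b => a (p.1, b) from
          (a.continuous.comp (Continuous.prodMk_right p.1)).measurable),
      FiniteMeasure.testAgainstNN_coe_eq]
    rfl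
  simp_rw [key]
  rw [ENNReal.tendsto_coe]
  exact (aux_testAgainstNN_joint.comp ((hφ.comp continuous_fst).prodMk continuous_snd)).tendsto p₀

open scoped ENNReal NNReal in
/-- for an open subgroup H ≤ G and a locally compact proper H-space
X ⊆ P_c(H) ⊆ P_c(G), the natural G-map F : G ×_H X → G·X, [g,x] ↦ gx, is a
G-equivariant homeomorphism.  Here P_c(G) carries the direct limit topology over the
weak*-topologized spaces P(C), C ⊆ G compact; G ×_H X is the quotient of G × X by
h·(g,x) = (gh⁻¹, hx) with the quotient topology, and G·X ⊆ P_c(G) has the subspace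
topology. -/
theorem stmt_12 {G : Type*} [Group G] [TopologicalSpace G] [IsTopologicalGroup G]
    [LocallyCompactSpace G] [SecondCountableTopology G] [T2Space G]
    [MeasurableSpace G] [BorelSpace G]
    (μhaar : Measure G) [μhaar.IsHaarMeasure]
    (H : Subgroup G) (hH : IsOpen (H : Set G))
    [τ : TopologicalSpace (CPM G)]
    -- the direct limit topology on P_c(G), via the inclusions P(C) → P_c(G)
    (j : ∀ C : Set G, IsCompact C → ProbabilityMeasure C → CPM G)
    (hj : ∀ (C : Set G) (hC : IsCompact C) (μ : ProbabilityMeasure C) (U : Set G),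
      MeasurableSet U → (j C hC μ).1 U = (μ : Measure C) (Subtype.val ⁻¹' U))
    (hτ : ∀ U : Set (CPM G), IsOpen U ↔ ∀ (C : Set G) (hC : IsCompact C),
      IsOpen (j C hC ⁻¹' U))
    -- the translation action of G on P_c(G): (gμ)(U) = μ(g⁻¹U)
    (act : G → CPM G → CPM G)
    (hact : ∀ (g : G) (ν : CPM G) (U : Set G), MeasurableSet U →
      (act g ν).1 U = ν.1 ((g * ·) ⁻¹' U))
    -- X ⊆ P_c(H): an H-invariant set of measures supported in H
    (X : Set (CPM G)) (hXH : ∀ ν ∈ X, ν.1 ((H : Set G)ᶜ) = 0)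
    (hXinv : ∀ h ∈ H, ∀ ν ∈ X, act h ν ∈ X)
    -- X is a locally compact proper H-space
    (hXlc : LocallyCompactSpace X)
    (hXproper : ∀ x ∈ X, ∀ y ∈ X, ∃ U V : Set (CPM G), IsOpen U ∧ IsOpen V ∧
      x ∈ U ∧ y ∈ V ∧ IsCompact (closure
        {h : G | h ∈ H ∧ ((act h '' (U ∩ X)) ∩ (V ∩ X)).Nonempty}))
    -- the induced space Q = G ×_H X with its quotient topology and G-action
    (Q : Type*) [TopologicalSpace Q] (π : G × X → Q) (hπsurj : Surjective π)
    (hπ : ∀ (g g' : G) (x x' : X), π (g, x) = π (g', x') ↔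
      ∃ h ∈ H, g' = g * h⁻¹ ∧ (x' : CPM G) = act h x)
    (hτQ : ∀ U : Set Q, IsOpen U ↔ IsOpen (π ⁻¹' U))
    (aQ : G → Q → Q) (haQ : ∀ (g' g : G) (x : X), aQ g' (π (g, x)) = π (g' * g, x))
    -- the natural map F : G ×_H X → G·X, [g, x] ↦ g·x
    (F : Q → {ν : CPM G | ∃ g : G, ∃ x ∈ X, ν = act g x})
    (hF : ∀ (g : G) (x : X), (F (π (g, x)) : CPM G) = act g x) :
    (∀ (g : G) (q : Q), (F (aQ g q) : CPM G) = act g (F q)) ∧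
      Continuous F ∧ IsOpenMap F ∧ Function.Bijective F := by
  classical
  have hHm : MeasurableSet (H : Set G) := hH.measurableSet
  -- extensionality for CPM
  have cpmext : ∀ {μ ν : CPM G}, (∀ U : Set G, MeasurableSet U → μ.1 U = ν.1 U) → μ = ν := by
    intro μ ν h
    exact Subtype.ext (MeasureTheory.Measure.ext h)
  -- algebraic lemmas about the action
  have act_mul : ∀ (g g' : G) (ν : CPM G), act g (act g' ν) = act (g * g') ν := by
    intro g g' ν
    apply cpmext
    intro U hU
    rw [hact g (act g' ν) U hU, hact g' ν _ ((continuous_mul_left g).measurable hU),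
      hact (g * g') ν U hU]
    congr 1
    ext y
    simp [mul_assoc]
  have act_one : ∀ ν : CPM G, act 1 ν = ν := by
    intro ν; apply cpmext; intro U hU
    rw [hact 1 ν U hU]
    simp
  -- measures in X give full mass to H
  have xH1 : ∀ ν ∈ X, ν.1 (H : Set G) = 1 := by
    intro ν hν
    have h2 := measure_add_measure_compl (μ := ν.1) hHm
    rw [hXH ν hν, add_zero] at h2
    haveI := ν.2.1
    rw [measure_univ] at h2
    exact h2
  -- evaluation of translates of measures in X on cosets
  have cosetEval : ∀ (g₀ g : G) (x : CPM G), x ∈ X →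
      (act g x).1 ((fun y => g₀⁻¹ * y) ⁻¹' (H : Set G)) = if g₀⁻¹ * g ∈ H then 1 else 0 := by
    intro g₀ g x hx
    have hPm : MeasurableSet ((fun y => g₀⁻¹ * y) ⁻¹' (H : Set G)) :=
      (continuous_mul_left g₀⁻¹).measurable hHm
    rw [hact g x _ hPm]
    have hset : ((g * ·) ⁻¹' ((fun y => g₀⁻¹ * y) ⁻¹' (H : Set G)))
        = {y : G | (g₀⁻¹ * g) * y ∈ (H : Set G)} := by
      ext y; simp [Set.mem_preimage, mul_assoc]
    rw [hset]
    by_cases hmem : g₀⁻¹ * g ∈ H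
    · rw [if_pos hmem]
      have : {y : G | (g₀⁻¹ * g) * y ∈ (H : Set G)} = (H : Set G) := by
        ext y
        constructor
        · intro hy
          have h3 := H.mul_mem (H.inv_mem hmem) hy
          rw [inv_mul_cancel_left] at h3
          exact h3
        · intro hy
          exact H.mul_mem hmem hy
      rw [this]
      exact xH1 x hx
    · rw [if_neg hmem]
      have hsub : {y : G | (g₀⁻¹ * g) * y ∈ (H : Set G)} ⊆ (H : Set G)ᶜ := by
        intro y hy hyH
        exact hmem (by simpa using H.mul_mem hy (H.inv_mem hyH))
      exact le_antisymm (le_trans (measure_mono hsub) (le_of_eq (hXH x hx))) zero_le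
  -- continuity of the inclusions j
  have jcont : ∀ (C : Set G) (hC : IsCompact C), Continuous (j C hC) := fun C hC =>
    continuous_def.mpr fun U hU => (hτ U).mp hU C hC
  -- the sigma-type presentation of CPM G
  have Jsurj : Surjective (fun s : Σ i : {s : Set G // IsCompact s},
      ProbabilityMeasure ↥(i.1) => j s.1.1 s.1.2 s.2) := by
    rintro ⟨m, hm, C, hC, hsupp⟩
    haveI : IsProbabilityMeasure m := hm
    have hCm : MeasurableSet C := hC.isClosed.measurableSet
    have hemb : MeasurableEmbedding ((↑) : C → G) := MeasurableEmbedding.subtype_coe hCm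
    have hCone : m C = 1 := by
      have h2 := measure_add_measure_compl (μ := m) hCm
      rw [hsupp, add_zero, measure_univ] at h2
      exact h2
    have hprob : IsProbabilityMeasure (Measure.comap Subtype.val m : Measure ↥C) := by
      constructor
      rw [hemb.comap_apply, Set.image_univ, Subtype.range_coe, hCone]
    refine ⟨⟨⟨C, hC⟩, ⟨Measure.comap Subtype.val m, hprob⟩⟩, ?_⟩
    apply cpmext
    intro U hU
    rw [hj C hC _ U hU]
    show (Measure.comap Subtype.val m) (Subtype.val ⁻¹' U) = m U
    rw [hemb.comap_apply, Subtype.image_preimage_coe, Set.inter_comm, measure_inter_conull hsupp]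
  have Jqm : IsQuotientMap (fun s : Σ i : {s : Set G // IsCompact s},
      ProbabilityMeasure ↥(i.1) => j s.1.1 s.1.2 s.2) := by
    rw [Topology.isQuotientMap_iff, isCoinducing_iff, and_comm]
    refine ⟨Jsurj, fun U => iff_comm.mp ?_⟩
    rw [hτ U, isOpen_sigma_iff]
    exact ⟨fun h i => h i.1 i.2, fun h C hC => h ⟨C, hC⟩⟩
  -- componentwise joint continuity
  have comp_cont : ∀ i : {s : Set G // IsCompact s},
      Continuous fun q : ProbabilityMeasure ↥(i.1) × G => act q.2 (j i.1 i.2 q.1) := by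
    rintro ⟨C, hC⟩
    rw [continuous_iff_continuousAt]
    rintro ⟨μ₀, g₀⟩
    obtain ⟨K, hK, hKnhds⟩ := exists_compact_mem_nhds g₀
    have hD : IsCompact ((fun p : G × G => p.1 * p.2) '' (K ×ˢ C)) :=
      (hK.prod hC).image continuous_mul
    set D : Set G := (fun p : G × G => p.1 * p.2) '' (K ×ˢ C) with hDdef
    haveI : CompactSpace ↥C := isCompact_iff_compactSpace.mp hC
    let a : C(↥K × ↥C, ↥D) :=
      ⟨fun p => ⟨p.1.1 * p.2.1, ⟨(p.1.1, p.2.1), ⟨p.1.2, p.2.2⟩, rfl⟩⟩,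
        Continuous.subtype_mk
          ((continuous_subtype_val.comp continuous_fst).mul
            (continuous_subtype_val.comp continuous_snd)) _⟩
    have hcont2 : Continuous fun p : ↥K × ProbabilityMeasure ↥C =>
        j D hD (p.2.map (f := fun b => a (p.1, b))
          ((a.continuous.comp (Continuous.prodMk_right p.1)).measurable.aemeasurable)) :=
      (jcont D hD).comp (aux_map_joint a)
    have keyeq : ∀ (k : ↥K) (μ : ProbabilityMeasure ↥C),
        act k.1 (j C hC μ) = j D hD (μ.map (f := fun b => a (k, b))
          ((a.continuous.comp (Continuous.prodMk_right k)).measurable.aemeasurable)) := by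
      intro k μ
      apply cpmext
      intro U hU
      rw [hact _ _ U hU, hj C hC μ _ ((continuous_mul_left k.1).measurable hU),
        hj D hD _ U hU,
        ProbabilityMeasure.map_apply' _ _ (measurable_subtype_coe hU)]
      rfl
    apply ContinuousOn.continuousAt _ (prod_mem_nhds Filter.univ_mem hKnhds)
    rw [continuousOn_iff_continuous_restrict]
    have hres : Set.domRestrict (Set.univ ×ˢ K)
          (fun q : ProbabilityMeasure ↥C × G => act q.2 (j C hC q.1))
        = (fun p : ↥K × ProbabilityMeasure ↥C =>
            j D hD (p.2.map (f := fun b => a (p.1, b))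
              ((a.continuous.comp (Continuous.prodMk_right p.1)).measurable.aemeasurable))) ∘
          (fun s : ↥(Set.univ ×ˢ K) => (⟨s.1.2, s.2.2⟩, s.1.1)) := by
      funext s
      exact keyeq ⟨s.1.2, s.2.2⟩ s.1.1
    rw [hres]
    exact hcont2.comp
      ((Continuous.subtype_mk (continuous_snd.comp continuous_subtype_val) _).prodMk
        (continuous_fst.comp continuous_subtype_val))
  -- joint continuity of the action on CPM G
  have Φcont : Continuous fun p : G × CPM G => act p.1 p.2 := by
    apply Jqm.continuous_lift_prod_right
    have hsig : Continuous fun q : (Σ i : {s : Set G // IsCompact s},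
        ProbabilityMeasure ↥(i.1) × G) => act q.2.2 (j q.1.1 q.1.2 q.2.1) :=
      continuous_sigma comp_cont
    have hcomp : (fun p : G × (Σ i : {s : Set G // IsCompact s}, ProbabilityMeasure ↥(i.1)) =>
          act p.1 (j p.2.1.1 p.2.1.2 p.2.2))
        = (fun q : (Σ i : {s : Set G // IsCompact s}, ProbabilityMeasure ↥(i.1) × G) =>
            act q.2.2 (j q.1.1 q.1.2 q.2.1)) ∘
          (fun p => Homeomorph.sigmaProdDistrib
            ((Homeomorph.prodComm G
              (Σ i : {s : Set G // IsCompact s}, ProbabilityMeasure ↥(i.1))) p)) := by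
      funext p
      rcases p with ⟨g, i, μ⟩
      rfl
    show Continuous fun p : G × (Σ i : {s : Set G // IsCompact s},
        ProbabilityMeasure ↥(i.1)) => act p.1 (j p.2.1.1 p.2.1.2 p.2.2)
    rw [hcomp]
    exact hsig.comp ((Homeomorph.sigmaProdDistrib).continuous.comp
      (Homeomorph.prodComm _ _).continuous)
  have contAct : ∀ g : G, Continuous fun ν : CPM G => act g ν := fun g =>
    Φcont.comp (continuous_const.prodMk continuous_id)
  -- continuity of π and F
  have πcont : Continuous π := continuous_def.mpr fun U hU => (hτQ U).mp hU
  have Fπval : Continuous fun p : G × X => ((F (π p)) : CPM G) := by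
    have heq : (fun p : G × X => ((F (π p)) : CPM G)) = fun p : G × X => act p.1 ↑p.2 := by
      funext p
      exact hF p.1 p.2
    rw [heq]
    exact Φcont.comp (continuous_fst.prodMk (continuous_subtype_val.comp continuous_snd))
  have Fπcont : Continuous (fun p : G × X => F (π p)) := continuous_induced_rng.mpr Fπval
  have Fcont : Continuous F := by
    rw [continuous_def]
    intro U hU
    rw [hτQ]
    exact hU.preimage Fπcont
  -- openness of the coset-mass sets
  have Wopen : ∀ g₀ : G,
      IsOpen {ν : CPM G | (1/2 : ℝ≥0∞) < ν.1 ((fun y => g₀⁻¹ * y) ⁻¹' (H : Set G))} := by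
    intro g₀
    rw [hτ]
    intro C hC
    have hPo : IsOpen ((fun y => g₀⁻¹ * y) ⁻¹' (H : Set G)) :=
      hH.preimage (continuous_mul_left g₀⁻¹)
    have hVo : IsOpen ((Subtype.val : ↥C → G) ⁻¹' ((fun y => g₀⁻¹ * y) ⁻¹' (H : Set G))) :=
      hPo.preimage continuous_subtype_val
    have hpre : j C hC ⁻¹'
          {ν : CPM G | (1/2 : ℝ≥0∞) < ν.1 ((fun y => g₀⁻¹ * y) ⁻¹' (H : Set G))}
        = {μ : ProbabilityMeasure ↥C | (1/2 : ℝ≥0∞) <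
            (μ : Measure ↥C) ((Subtype.val : ↥C → G) ⁻¹' ((fun y => g₀⁻¹ * y) ⁻¹' (H : Set G)))} := by
      ext μ
      simp only [Set.mem_preimage, Set.mem_setOf_eq, hj C hC μ _ hPo.measurableSet]
    rw [hpre]
    rw [isOpen_iff_mem_nhds]
    intro μ₀ hμ₀
    have hlim : (μ₀ : Measure ↥C) ((Subtype.val : ↥C → G) ⁻¹' ((fun y => g₀⁻¹ * y) ⁻¹' (H : Set G)))
        ≤ Filter.liminf (fun μ : ProbabilityMeasure ↥C =>
            (μ : Measure ↥C) ((Subtype.val : ↥C → G) ⁻¹' ((fun y => g₀⁻¹ * y) ⁻¹' (H : Set G))))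
          (𝓝 μ₀) :=
      le_measure_liminf_of_limsup_measure_compl_le hVo.measurableSet
        (ProbabilityMeasure.limsup_measure_closed_le_of_tendsto Filter.tendsto_id
          (isClosed_compl_iff.mpr hVo))
    exact Filter.eventually_lt_of_lt_liminf (lt_of_lt_of_le hμ₀ hlim)
  -- equivariance
  have equiv : ∀ (g : G) (q : Q), (F (aQ g q) : CPM G) = act g (F q) := by
    intro g q
    obtain ⟨⟨g₁, x⟩, rfl⟩ := hπsurj q
    rw [haQ, hF, hF]
    exact (act_mul g g₁ x).symm
  -- injectivity
  have Finj : Function.Injective F := by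
    intro q₁ q₂ hq
    obtain ⟨⟨g, x⟩, rfl⟩ := hπsurj q₁
    obtain ⟨⟨g', x'⟩, rfl⟩ := hπsurj q₂
    have hval : act g ↑x = act g' ↑x' := by rw [← hF g x, ← hF g' x', hq]
    have hmem : g'⁻¹ * g ∈ H := by
      by_contra hc
      have h1 := cosetEval g' g ↑x x.2
      rw [if_neg hc, hval, cosetEval g' g' ↑x' x'.2,
        if_pos (by rw [inv_mul_cancel]; exact H.one_mem)] at h1
      exact one_ne_zero h1
    refine (hπ g g' x x').mpr ⟨g'⁻¹ * g, hmem, by group, ?_⟩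
    have h2 : act g'⁻¹ (act g ↑x) = act g'⁻¹ (act g' ↑x') := by rw [hval]
    rw [act_mul, act_mul, inv_mul_cancel, act_one] at h2
    exact h2.symm
  -- surjectivity
  have Fsurj : Function.Surjective F := by
    rintro ⟨ν, g, x, hxX, hν⟩
    refine ⟨π (g, ⟨x, hxX⟩), ?_⟩
    apply Subtype.ext
    rw [hF]
    exact hν.symm
  -- openness
  have Fopen : IsOpenMap F := by
    intro O hO
    rw [isOpen_iff_forall_mem_open]
    rintro ν₀ ⟨q₀, hq₀O, rfl⟩
    obtain ⟨⟨g₀, x₀⟩, rfl⟩ := hπsurj q₀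
    have hslice : IsOpen ((fun x : X => π (g₀, x)) ⁻¹' O) :=
      hO.preimage (πcont.comp (Continuous.prodMk_right g₀))
    obtain ⟨Sset, hSopen, hSeq⟩ := isOpen_induced_iff.mp hslice
    refine ⟨Subtype.val ⁻¹'
      ({ν : CPM G | (1/2 : ℝ≥0∞) < ν.1 ((fun y => g₀⁻¹ * y) ⁻¹' (H : Set G))} ∩
        (fun ν : CPM G => act g₀⁻¹ ν) ⁻¹' Sset), ?_, ?_, ?_⟩
    · rintro ⟨ν, g, x, hxX, hνeq⟩ ⟨hνW, hνS⟩
      have hmem : g₀⁻¹ * g ∈ H := by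
        by_contra hc
        have h1 := cosetEval g₀ g x hxX
        rw [if_neg hc, ← hνeq] at h1
        rw [Set.mem_setOf_eq, h1] at hνW
        exact ENNReal.not_lt_zero hνW
      have hx' : act g₀⁻¹ ν = act (g₀⁻¹ * g) x := by rw [hνeq, act_mul]
      have hx'X : act g₀⁻¹ ν ∈ X := by
        rw [hx']
        exact hXinv _ hmem x hxX
      have hx'slice : (⟨act g₀⁻¹ ν, hx'X⟩ : X) ∈ (fun x : X => π (g₀, x)) ⁻¹' O := by
        rw [← hSeq]
        exact hνS
      refine ⟨π (g₀, ⟨act g₀⁻¹ ν, hx'X⟩), hx'slice, ?_⟩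
      apply Subtype.ext
      rw [hF]
      show act g₀ (act g₀⁻¹ ν) = ν
      rw [act_mul, mul_inv_cancel, act_one]
    · exact (((Wopen g₀).inter (hSopen.preimage (contAct g₀⁻¹))).preimage
        continuous_subtype_val)
    · constructor
      · show (1/2 : ℝ≥0∞) < (F (π (g₀, x₀)) : CPM G).1 ((fun y => g₀⁻¹ * y) ⁻¹' (H : Set G))
        rw [hF, cosetEval g₀ g₀ ↑x₀ x₀.2, if_pos (by rw [inv_mul_cancel]; exact H.one_mem)]
        exact ENNReal.half_lt_self one_ne_zero ENNReal.one_ne_top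
      · show act g₀⁻¹ ↑(F (π (g₀, x₀))) ∈ Sset
        rw [hF, act_mul, inv_mul_cancel, act_one]
        have hx₀ : (x₀ : X) ∈ (fun x : X => π (g₀, x)) ⁻¹' O := hq₀O
        rw [← hSeq] at hx₀
        exact hx₀
  exact ⟨equiv, Fcont, Fopen, Finj, Fsurj⟩
end

section
/- Let G be a locally compact group, H an open subgroup, X a proper H-space with cutoff function c : X → ℝ≥0 (for the H-action). Define i(c) on the induced space G ×_H X by i(c)[g, x] = c(gx) if g ∈ H and 0 otherwise. Then i(c) is a well-defined cutoff function for the proper G-action on G ×_H X (up to normalization of Haar measures): ∫_G i(c)(g⁻¹·[g₀, x]) dg = 1 for every [g₀, x], and supp(i(c)) ∩ G·K is compact for every compact K ⊆ G ×_H X. -/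
open MeasureTheory Pointwise Function Classical

private lemma continuous_dite_subgroup {G : Type*} [Group G] [TopologicalSpace G]
    [ContinuousMul G] (H : Subgroup G) (hH : IsOpen (H : Set G))
    {X Y : Type*} [TopologicalSpace X] [TopologicalSpace Y]
    (u : ↥H × X → Y) (hu : Continuous u) (y₀ : Y) :
    Continuous (fun p : G × X => if hg : p.1 ∈ H then u (⟨p.1, hg⟩, p.2) else y₀) := by
  set w := fun p : G × X => if hg : p.1 ∈ H then u (⟨p.1, hg⟩, p.2) else y₀ with hw
  have hι : Topology.IsOpenEmbedding (fun r : ↥H × X => ((r.1 : G), r.2)) :=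
    hH.isOpenEmbedding_subtypeVal.prodMap Topology.IsOpenEmbedding.id
  rw [continuous_iff_continuousAt]
  intro p
  by_cases hp : p.1 ∈ H
  · have hpe : p = (fun r : ↥H × X => ((r.1 : G), r.2)) (⟨p.1, hp⟩, p.2) := rfl
    rw [hpe]
    refine hι.continuousAt_iff.mp ?_
    have hcomp : (w ∘ fun r : ↥H × X => ((r.1 : G), r.2)) = u := by
      funext r
      simp only [w, comp_apply, dif_pos r.1.2, Subtype.coe_eta]
    rw [hcomp]
    exact hu.continuousAt
  · have hev : (fun _ : G × X => y₀) =ᶠ[nhds p] w := by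
      filter_upwards [((H.isClosed_of_isOpen hH).isOpen_compl.preimage
        continuous_fst).mem_nhds hp] with q hq
      simp only [hw]
      rw [dif_neg (fun h : q.1 ∈ H => hq h)]
    exact continuousAt_const.congr hev

private lemma contQ_aux {A B Y : Type*} [TopologicalSpace A] [TopologicalSpace B]
    [TopologicalSpace Y] (π : A → B) (hτ : ∀ U : Set B, IsOpen U ↔ IsOpen (π ⁻¹' U))
    (f : B → Y) (hf : Continuous (f ∘ π)) : Continuous f :=
  continuous_def.mpr fun U hU => (hτ _).mpr (hf.isOpen_preimage U hU)


/-- if c is a cutoff function for the proper action of an open subgroup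
H ≤ G on X, then its extension i(c), i(c)[g,x] = c(gx) for g ∈ H and 0 otherwise, is a
cutoff function for the proper G-action on the induced space Q = G ×_H X (here Q is
given as the quotient of G × X by h·(g,x) = (gh⁻¹,hx), with the quotient topology and
with G acting by left translation on the first coordinate; Haar measure on H is the
restriction of that of G). -/
theorem stmt_18 {G : Type*} [Group G] [TopologicalSpace G] [IsTopologicalGroup G]
    [LocallyCompactSpace G] [T2Space G] [MeasurableSpace G] [BorelSpace G]
    (μ : Measure G) [μ.IsHaarMeasure]
    (H : Subgroup G) (hH : IsOpen (H : Set G))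
    {X : Type*} [TopologicalSpace X] [MulAction H X] [ContinuousSMul H X]
    (hXproper : BourbakiProper H X)
    -- c is a cutoff function for the H-action on X
    (c : X → ℝ) (hc : Continuous c) (hc0 : ∀ x, 0 ≤ c x)
    (hcsupp : ∀ K : Set X, IsCompact K → IsCompact (tsupport c ∩ ⋃ h : H, h • K))
    (hcint : ∀ x : X, ∫ h : H, c (h⁻¹ • x) ∂(Measure.comap Subtype.val μ) = 1)
    -- the induced space Q = G ×_H X with its quotient topology and G-action
    (Q : Type*) [TopologicalSpace Q] (π : G × X → Q) (hπsurj : Surjective π)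
    (hπ : ∀ (g g' : G) (x x' : X), π (g, x) = π (g', x') ↔
      ∃ h : H, g' = g * (↑h)⁻¹ ∧ x' = h • x)
    (hτQ : ∀ U : Set Q, IsOpen U ↔ IsOpen (π ⁻¹' U))
    (aQ : G → Q → Q) (haQ : ∀ (g' g : G) (x : X), aQ g' (π (g, x)) = π (g' * g, x))
    -- the extension i(c) of c to Q
    (ic : Q → ℝ)
    (hic : ∀ (g : G) (x : X), ic (π (g, x)) =
      if hg : g ∈ H then c ((⟨g, hg⟩ : H) • x) else 0) :
    Continuous ic ∧ (∀ q, 0 ≤ ic q) ∧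
      (∀ q : Q, ∫ g, ic (aQ g⁻¹ q) ∂μ = 1) ∧
      ∀ K : Set Q, IsCompact K → IsCompact (tsupport ic ∩ ⋃ g : G, aQ g '' K) := by
  -- basic facts
  have hπc : Continuous π := continuous_def.mpr fun U hU => (hτQ U).mp hU
  have Hcl : IsClosed (H : Set G) := H.isClosed_of_isOpen hH
  -- continuity of ic
  have hicπ : (ic ∘ π) = fun p : G × X =>
      if hg : p.1 ∈ H then c ((⟨p.1, hg⟩ : H) • p.2) else 0 :=
    funext fun p => hic p.1 p.2
  have hicc : Continuous ic := by
    refine contQ_aux π hτQ ic ?_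
    rw [hicπ]
    exact continuous_dite_subgroup H hH (fun r => c (r.1 • r.2))
      (hc.comp continuous_smul) 0
  -- nonnegativity
  have hic0 : ∀ q, 0 ≤ ic q := by
    intro q
    obtain ⟨p, rfl⟩ := hπsurj q
    rw [show π p = π (p.1, p.2) from rfl, hic]
    split_ifs
    · exact hc0 _
    · exact le_refl 0
  -- the integral condition
  have hHm : MeasurableSet (H : Set G) := hH.measurableSet
  have hint : ∀ q : Q, ∫ g, ic (aQ g⁻¹ q) ∂μ = 1 := by
    intro q
    obtain ⟨⟨g₀, x⟩, rfl⟩ := hπsurj q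
    have h1 : ∀ g : G, ic (aQ g⁻¹ (π (g₀, x)))
        = (fun a : G => ic (π (a⁻¹, x))) (g₀⁻¹ * g) := by
      intro g
      rw [haQ]
      simp only [mul_inv_rev, inv_inv]
    simp_rw [h1]
    rw [integral_mul_left_eq_self (fun a : G => ic (π (a⁻¹, x))) g₀⁻¹]
    have h2 : ∀ g : G, ic (π (g⁻¹, x)) = if hg : g ∈ H then c ((⟨g, hg⟩ : H)⁻¹ • x) else 0 := by
      intro g
      rw [hic]
      by_cases hg : g ∈ H
      · rw [dif_pos (H.inv_mem hg), dif_pos hg]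
        rfl
      · rw [dif_neg (fun hmem => hg (by simpa using H.inv_mem hmem)), dif_neg hg]
    simp_rw [h2]
    have hF0 : ∀ g ∉ (H : Set G),
        (if hg : g ∈ H then c ((⟨g, hg⟩ : H)⁻¹ • x) else 0) = 0 := fun g hg => dif_neg hg
    calc ∫ g, (if hg : g ∈ H then c ((⟨g, hg⟩ : H)⁻¹ • x) else 0) ∂μ
        = ∫ g in (H : Set G), (if hg : g ∈ H then c ((⟨g, hg⟩ : H)⁻¹ • x) else 0) ∂μ :=
          (MeasureTheory.setIntegral_eq_integral_of_forall_compl_eq_zero hF0).symm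
      _ = ∫ a : (H : Set G),
            (if hg : (a : G) ∈ H then c ((⟨(a : G), hg⟩ : H)⁻¹ • x) else 0)
            ∂(Measure.comap Subtype.val μ) :=
          (MeasureTheory.integral_subtype_comap hHm _).symm
      _ = ∫ a : (H : Set G), c ((⟨(a : G), a.2⟩ : H)⁻¹ • x)
            ∂(Measure.comap Subtype.val μ) := by
          congr 1
          funext a
          rw [dif_pos (show (a : G) ∈ H from a.2)]
      _ = 1 := hcint x
  refine ⟨hicc, hic0, hint, ?_⟩
  intro K hK
  rcases K.eq_empty_or_nonempty with rfl | ⟨k₀, hk₀⟩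
  · simp
  obtain ⟨p₀, hp₀⟩ := hπsurj k₀
  set x₀ := p₀.2 with hx₀
  -- continuity of the translations aQ g
  have haQπ : ∀ (g : G) (p : G × X), aQ g (π p) = π (g * p.1, p.2) :=
    fun g p => haQ g p.1 p.2
  have haQc : ∀ g : G, Continuous (aQ g) := by
    intro g
    refine contQ_aux π hτQ (aQ g) ?_
    rw [show (aQ g ∘ π) = π ∘ (fun p : G × X => (g * p.1, p.2)) from funext fun p => haQπ g p]
    exact hπc.comp ((continuous_const.mul continuous_fst).prodMk continuous_snd)
  -- the section x ↦ [1, x]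
  set π1 : X → Q := fun x => π (1, x) with hπ1
  have hπ1c : Continuous π1 := hπc.comp (continuous_const.prodMk continuous_id)
  -- the retraction ρ
  set w : G × X → X := fun p => if hg : p.1 ∈ H then (⟨p.1, hg⟩ : H) • p.2 else x₀ with hwdef
  have hwc : Continuous w :=
    continuous_dite_subgroup H hH (fun r : ↥H × X => r.1 • r.2) continuous_smul x₀
  set ρ : Q → X := fun q => w (surjInv hπsurj q) with hρdef
  have hρπ : ∀ p : G × X, ρ (π p) = w p := by
    intro p
    have hs : π (surjInv hπsurj (π p)) = π p := surjInv_eq hπsurj (π p)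
    set s := surjInv hπsurj (π p) with hsdef
    obtain ⟨h, hg1, hx1⟩ := (hπ s.1 p.1 s.2 p.2).mp (by exact hs)
    show w s = w p
    simp only [hwdef]
    by_cases hs1 : s.1 ∈ H
    · have hp1 : p.1 ∈ H := by rw [hg1]; exact H.mul_mem hs1 (H.inv_mem h.2)
      rw [dif_pos hs1, dif_pos hp1, hx1, smul_smul]
      congr 1
      apply Subtype.ext
      show s.1 = p.1 * (h : G)
      rw [hg1, inv_mul_cancel_right]
    · have hp1 : p.1 ∉ H := by
        intro hp1
        apply hs1
        have hseq : s.1 = p.1 * (h : G) := by rw [hg1, inv_mul_cancel_right]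
        rw [hseq]; exact H.mul_mem hp1 h.2
      rw [dif_neg hs1, dif_neg hp1]
  have hρc : Continuous ρ := by
    refine contQ_aux π hτQ ρ ?_
    rw [show (ρ ∘ π) = w from funext hρπ]
    exact hwc
  -- representing points with first coordinate in H
  have hrep : ∀ (g : G) (hg : g ∈ H) (x : X), π (g, x) = π1 ((⟨g, hg⟩ : H) • x) := by
    intro g hg x
    exact (hπ g 1 x _).mpr ⟨⟨g, hg⟩, (mul_inv_cancel g).symm, rfl⟩
  -- range of π1 is closed
  have hpre_range : π ⁻¹' (Set.range π1) = {p : G × X | p.1 ∈ H} := by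
    ext p
    constructor
    · rintro ⟨x, hx⟩
      obtain ⟨h, hg1, -⟩ := (hπ 1 p.1 x p.2).mp hx
      show p.1 ∈ H
      have : p.1 = ((h : G))⁻¹ := by rw [hg1, one_mul]
      rw [this]; exact H.inv_mem h.2
    · intro hp
      exact ⟨(⟨p.1, hp⟩ : H) • p.2, (hrep p.1 hp p.2).symm⟩
  have hQ0closed : IsClosed (Set.range π1) := by
    rw [← isOpen_compl_iff, hτQ, Set.preimage_compl, hpre_range]
    exact (Hcl.preimage continuous_fst).isOpen_compl
  have hts_range : tsupport ic ⊆ Set.range π1 := by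
    apply closure_minimal ?_ hQ0closed
    intro q hq
    obtain ⟨p, rfl⟩ := hπsurj q
    by_cases hp : p.1 ∈ H
    · exact ⟨(⟨p.1, hp⟩ : H) • p.2, (hrep p.1 hp p.2).symm⟩
    · exact absurd (by rw [show π p = π (p.1, p.2) from rfl, hic, dif_neg hp]) hq
  -- π1 is an open map
  have hι : Topology.IsOpenEmbedding (fun r : ↥H × X => ((r.1 : G), r.2)) :=
    hH.isOpenEmbedding_subtypeVal.prodMap Topology.IsOpenEmbedding.id
  have hπ1open : ∀ V : Set X, IsOpen V → IsOpen (π1 '' V) := by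
    intro V hV
    rw [hτQ]
    have himg : π ⁻¹' (π1 '' V) =
        (fun r : ↥H × X => ((r.1 : G), r.2)) '' {r : ↥H × X | r.1 • r.2 ∈ V} := by
      ext p
      constructor
      · rintro ⟨v, hvV, hv⟩
        obtain ⟨h, hg1, hx1⟩ := (hπ 1 p.1 v p.2).mp hv
        have hp1 : p.1 ∈ H := by
          have : p.1 = ((h : G))⁻¹ := by rw [hg1, one_mul]
          rw [this]; exact H.inv_mem h.2
        refine ⟨(⟨p.1, hp1⟩, p.2), ?_, rfl⟩
        show (⟨p.1, hp1⟩ : H) • p.2 ∈ V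
        have heq : (⟨p.1, hp1⟩ : H) = h⁻¹ := Subtype.ext (by show p.1 = ((h : G))⁻¹; rw [hg1, one_mul])
        rw [heq, hx1, inv_smul_smul]
        exact hvV
      · rintro ⟨⟨h, x⟩, hmem, rfl⟩
        exact ⟨h • x, hmem,
          ((hπ (↑h) 1 x (h • x)).mpr ⟨h, (mul_inv_cancel (h : G)).symm, rfl⟩).symm⟩
    rw [himg]
    exact hι.isOpenMap _ (hV.preimage continuous_smul)
  -- the sets
  set D := ⋃ g : G, aQ g '' K with hDdef
  set F := π1 ⁻¹' (tsupport ic) with hFdef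
  have hFclosed : IsClosed F := (isClosed_tsupport ic).preimage hπ1c
  have hFsub : F ⊆ tsupport c := by
    intro x hx
    have hx' : π1 x ∈ closure (support ic) := hx
    show x ∈ closure (support c)
    apply mem_closure_iff.mpr
    intro V hV hxV
    obtain ⟨q, hq1, hq2⟩ := mem_closure_iff.mp hx' (π1 '' V) (hπ1open V hV) ⟨x, hxV, rfl⟩
    obtain ⟨v, hvV, rfl⟩ := hq1
    refine ⟨v, hvV, ?_⟩
    show c v ≠ 0
    have h1 : ic (π1 v) = c v := by
      show ic (π (1, v)) = c v
      rw [hic, dif_pos H.one_mem]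
      rw [show (⟨1, H.one_mem⟩ : H) = 1 from rfl, one_smul]
    rw [← h1]
    exact hq2
  -- the coset neighbourhoods
  set N : G → Set Q := fun g => π '' {p : G × X | g⁻¹ * p.1 ∈ H} with hNdef
  have hNpre : ∀ g : G, π ⁻¹' (N g) = {p : G × X | g⁻¹ * p.1 ∈ H} := by
    intro g
    ext p
    constructor
    · rintro ⟨p', hp', hpe⟩
      obtain ⟨h, hg1, -⟩ := (hπ p'.1 p.1 p'.2 p.2).mp hpe
      show g⁻¹ * p.1 ∈ H
      rw [hg1, ← mul_assoc]
      exact H.mul_mem hp' (H.inv_mem h.2)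
    · intro hp
      exact ⟨p, hp, rfl⟩
  have hNopen : ∀ g, IsOpen (N g) := fun g => (hτQ _).mpr
    (by rw [hNpre]; exact hH.preimage (continuous_const.mul continuous_fst))
  have hNclosed : ∀ g, IsClosed (N g) := by
    intro g
    rw [← isOpen_compl_iff, hτQ, Set.preimage_compl, hNpre]
    exact (Hcl.preimage (continuous_const.mul continuous_fst)).isOpen_compl
  -- finite cover of K
  have hcov : K ⊆ ⋃ g : G, N g := by
    intro q hq
    obtain ⟨p, rfl⟩ := hπsurj q
    refine Set.mem_iUnion.mpr ⟨p.1, ⟨p, ?_, rfl⟩⟩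
    show p.1⁻¹ * p.1 ∈ H
    rw [inv_mul_cancel]; exact H.one_mem
  obtain ⟨t, ht⟩ := hK.elim_finite_subcover N hNopen hcov
  set P : Set X := ⋃ g ∈ t, ρ '' (aQ g⁻¹ '' (K ∩ N g)) with hPdef
  have hPcomp : IsCompact P :=
    t.isCompact_biUnion fun g _ =>
      ((hK.inter_right (hNclosed g)).image (haQc g⁻¹)).image hρc
  -- identification of π1 ⁻¹' D
  have hD1 : π1 ⁻¹' D ⊆ ⋃ h : H, h • P := by
    intro x hx
    obtain ⟨g, k, hkK, hk⟩ := by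
      simpa only [hDdef, Set.mem_iUnion, Set.mem_image, Set.mem_preimage] using hx
    obtain ⟨p, rfl⟩ := hπsurj k
    obtain ⟨g₀, hg₀t, hkN⟩ := Set.mem_iUnion₂.mp (ht hkK)
    have hp1 : p ∈ {p : G × X | g₀⁻¹ * p.1 ∈ H} := by rw [← hNpre g₀]; exact hkN
    have hp1' : g₀⁻¹ * p.1 ∈ H := hp1
    have hmemP : (⟨g₀⁻¹ * p.1, hp1'⟩ : H) • p.2 ∈ P := by
      apply Set.mem_biUnion hg₀t
      refine ⟨aQ g₀⁻¹ (π p), ⟨π p, ⟨hkK, hkN⟩, rfl⟩, ?_⟩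
      rw [haQπ g₀⁻¹ p, hρπ (g₀⁻¹ * p.1, p.2)]
      simp only [hwdef]
      exact dif_pos hp1'
    obtain ⟨h₀, -, hx0⟩ := (hπ (g * p.1) 1 p.2 x).mp (by rw [← haQπ g p, hk])
    refine Set.mem_iUnion.mpr ⟨h₀ * (⟨g₀⁻¹ * p.1, hp1'⟩ : H)⁻¹, ?_⟩
    refine ⟨(⟨g₀⁻¹ * p.1, hp1'⟩ : H) • p.2, hmemP, ?_⟩
    show (h₀ * (⟨g₀⁻¹ * p.1, hp1'⟩ : H)⁻¹) • ((⟨g₀⁻¹ * p.1, hp1'⟩ : H) • p.2) = x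
    rw [smul_smul, inv_mul_cancel_right]
    exact hx0.symm
  have hD2 : (⋃ h : H, h • P) ⊆ π1 ⁻¹' D := by
    intro x hx
    obtain ⟨h, hx'⟩ := Set.mem_iUnion.mp hx
    obtain ⟨y, hyP, rfl⟩ := hx'
    obtain ⟨g₀, hg₀t, hy⟩ := Set.mem_iUnion₂.mp hyP
    obtain ⟨q', ⟨k, ⟨hkK, hkN⟩, rfl⟩, rfl⟩ := hy
    obtain ⟨p, rfl⟩ := hπsurj k
    have hp1 : p ∈ {p : G × X | g₀⁻¹ * p.1 ∈ H} := by rw [← hNpre g₀]; exact hkN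
    have hp1' : g₀⁻¹ * p.1 ∈ H := hp1
    set h₁ : H := ⟨g₀⁻¹ * p.1, hp1'⟩ with hh₁
    have hρval : ρ (aQ g₀⁻¹ (π p)) = h₁ • p.2 := by
      rw [haQπ g₀⁻¹ p, hρπ (g₀⁻¹ * p.1, p.2)]
      simp only [hwdef]
      exact dif_pos hp1'
    rw [hρval]
    show π1 (h • h₁ • p.2) ∈ D
    refine Set.mem_iUnion.mpr ⟨((h * h₁ : H) : G) * p.1⁻¹, ⟨π p, hkK, ?_⟩⟩
    rw [haQπ]
    show π (((h * h₁ : H) : G) * p.1⁻¹ * p.1, p.2) = π1 (h • h₁ • p.2)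
    rw [inv_mul_cancel_right]
    show π (((h * h₁ : H) : G), p.2) = π (1, h • h₁ • p.2)
    refine (hπ _ 1 p.2 _).mpr ⟨h * h₁, (mul_inv_cancel _).symm, ?_⟩
    rw [mul_smul]
  -- conclusion
  have hAeq : tsupport ic ∩ D = π1 '' (F ∩ π1 ⁻¹' D) := by
    ext q
    constructor
    · rintro ⟨hq1, hq2⟩
      obtain ⟨x, rfl⟩ := hts_range hq1
      exact ⟨x, ⟨hq1, hq2⟩, rfl⟩
    · rintro ⟨x, ⟨hx1, hx2⟩, rfl⟩
      exact ⟨hx1, hx2⟩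
  rw [hAeq]
  have hset : F ∩ π1 ⁻¹' D = F ∩ (tsupport c ∩ ⋃ h : H, h • P) := by
    apply Set.Subset.antisymm
    · rintro x ⟨hxF, hxD⟩
      exact ⟨hxF, hFsub hxF, hD1 hxD⟩
    · rintro x ⟨hxF, -, hxP⟩
      exact ⟨hxF, hD2 hxP⟩
  rw [hset]
  exact ((hcsupp P hPcomp).inter_left hFclosed).image hπ1c
end
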